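/- There exists a universal constant c such that for every positive integer k, every function f from positive integers to positive integers, and every graph G obtained from the ringed tree RT(k) (with n = 2^k − 1 vertices) by adding arbitrary extra edges, each joining two vertices u,v at the same level with d_R(u,v) ≤ f(n), one has δ(G) ≤ c·max(1, log f(n)). -/

import Mathlib

/-- The Gromov four-point quantity `δ(u,v,w,x)`: with the three pairings of the
four vertices sorted, half the difference between the largest and the second
largest pair-sum of graph distances. -/
noncomputable def deltaFour {V : Type*} (G : SimpleGraph V) (u v w x : V) : ℝ :=
  let a : ℝ := (G.dist u v : ℝ) + (G.dist w x : ℝ)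
  let b : ℝ := (G.dist u x : ℝ) + (G.dist v w : ℝ)
  let c : ℝ := (G.dist u w : ℝ) + (G.dist v x : ℝ)
  (2 * max a (max b c) + min a (min b c) - (a + b + c)) / 2

/-- The hyperbolicity `δ(G)` of a graph: the supremum of `δ(u,v,w,x)` over all
quadruples of vertices. -/
noncomputable def hyperbolicity {V : Type*} (G : SimpleGraph V) : ℝ :=
  ⨆ u, ⨆ v, ⨆ w, ⨆ x, deltaFour G u v w x

/-- Vertex set of the ringed tree with `k` levels: level `i` (for `i < k`) consists of the
integers `{0, …, 2^i - 1}`. -/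
abbrev RTV (k : ℕ) : Type := Σ i : Fin k, Fin (2 ^ (i : ℕ))

/-- Tree adjacency: each vertex `σ` at level `i` is joined to its children `2σ` and `2σ+1`
at level `i+1`. -/
def treeAdj {k : ℕ} (u v : RTV k) : Prop :=
  ((u.1 : ℕ) + 1 = (v.1 : ℕ) ∧ ((v.2 : ℕ) = 2 * (u.2 : ℕ) ∨ (v.2 : ℕ) = 2 * (u.2 : ℕ) + 1)) ∨
  ((v.1 : ℕ) + 1 = (u.1 : ℕ) ∧ ((u.2 : ℕ) = 2 * (v.2 : ℕ) ∨ (u.2 : ℕ) = 2 * (v.2 : ℕ) + 1))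

/-- Ring adjacency: at each level `i ≥ 1`, `m` is joined to `m + 1 (mod 2^i)`. -/
def ringAdj {k : ℕ} (u v : RTV k) : Prop :=
  (u.1 : ℕ) = (v.1 : ℕ) ∧ 1 ≤ (u.1 : ℕ) ∧
    ((v.2 : ℕ) = ((u.2 : ℕ) + 1) % 2 ^ (u.1 : ℕ) ∨ (u.2 : ℕ) = ((v.2 : ℕ) + 1) % 2 ^ (v.1 : ℕ))

lemma ringAdj_no_loop {i m : ℕ} (hm : m < 2 ^ i) (hi : 1 ≤ i) : m ≠ (m + 1) % 2 ^ i := by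
  have h2 : 2 ≤ 2 ^ i := by
    calc 2 = 2 ^ 1 := by norm_num
    _ ≤ 2 ^ i := Nat.pow_le_pow_right (by norm_num) hi
  intro h
  rcases Nat.lt_or_ge (m + 1) (2 ^ i) with hlt | hge
  · rw [Nat.mod_eq_of_lt hlt] at h; omega
  · have he : m + 1 = 2 ^ i := by omega
    rw [he, Nat.mod_self] at h; omega

/-- The ringed tree `RT(k)`: the fully binary tree with `k` levels, with the vertices of each
level `i ≥ 1` additionally connected into a ring. -/
def ringedTree (k : ℕ) : SimpleGraph (RTV k) where
  Adj u v := treeAdj u v ∨ ringAdj u v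
  symm := by
    constructor
    rintro u v (h | ⟨h1, h2, h3⟩)
    · exact Or.inl (Or.symm h)
    · exact Or.inr ⟨h1.symm, h1 ▸ h2, Or.symm h3⟩
  loopless := by
    constructor
    rintro u ((⟨h1, _⟩ | ⟨h1, _⟩) | ⟨_, h2, (h3 | h3)⟩)
    · omega
    · omega
    · exact ringAdj_no_loop u.2.isLt h2 h3
    · exact ringAdj_no_loop u.2.isLt h2 h3

/-- Cyclic distance on a ring with `N` vertices: `min(|a-b|, N - |a-b|)`. -/
def cycDist (N a b : ℕ) : ℕ := min (Nat.dist a b) (N - Nat.dist a b)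

/-- Ring distance `d_R(u,v)` of two vertices of a ringed tree on the same level. -/
def rtRingDist {k : ℕ} (u v : RTV k) : ℕ := cycDist (2 ^ (u.1 : ℕ)) (u.2 : ℕ) (v.2 : ℕ)

/-- The parent of a vertex `m` at level `i ≥ 1` is `⌊m/2⌋` at level `i - 1`. -/
def rtParent {k : ℕ} (u : RTV k) (h : 1 ≤ (u.1 : ℕ)) : RTV k :=
  ⟨⟨(u.1 : ℕ) - 1, Nat.lt_of_le_of_lt (Nat.sub_le _ 1) u.1.isLt⟩,
   ⟨(u.2 : ℕ) / 2, by
      have h1 : (u.2 : ℕ) < 2 ^ (u.1 : ℕ) := u.2.isLt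
      have h2 : 2 ^ ((u.1 : ℕ) - 1) * 2 = 2 ^ (u.1 : ℕ) := by
        rw [← pow_succ]; congr 1; omega
      show (u.2 : ℕ) / 2 < 2 ^ ((u.1 : ℕ) - 1)
      exact Nat.div_lt_of_lt_mul (by omega)⟩⟩

namespace RTProof


variable {k : ℕ}

abbrev lv (u : RTV k) : ℕ := (u.1 : ℕ)
abbrev ps (u : RTV k) : ℕ := (u.2 : ℕ)

lemma ps_lt (u : RTV k) : ps u < 2 ^ lv u := u.2.isLt

lemma lv_lt (u : RTV k) : lv u < k := u.1.isLt

lemma rtv_ext {u v : RTV k} (h1 : lv u = lv v) (h2 : ps u = ps v) : u = v := by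
  obtain ⟨⟨i, hi⟩, ⟨a, ha⟩⟩ := u
  obtain ⟨⟨j, hj⟩, ⟨b, hb⟩⟩ := v
  simp only [lv, ps] at h1 h2
  subst h1; subst h2; rfl

lemma cycDist_self (N a : ℕ) : cycDist N a a = 0 := by simp [cycDist, Nat.dist]

lemma cycDist_comm (N a b : ℕ) : cycDist N a b = cycDist N b a := by
  unfold cycDist; rw [Nat.dist_comm]

lemma cycDist_triangle {N a b c : ℕ} (ha : a < N) (hb : b < N) (hc : c < N) :
    cycDist N a b ≤ cycDist N a c + cycDist N c b := by
  simp only [cycDist, Nat.dist]; omega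

lemma cycDist_half {M a b : ℕ} (ha : a < 2 * M) (hb : b < 2 * M) :
    cycDist M (a / 2) (b / 2) ≤ (cycDist (2 * M) a b + 1) / 2 := by
  simp only [cycDist, Nat.dist]; omega

/-- Ancestor position of `u` at level `m`. -/
def ap (m : ℕ) (u : RTV k) : ℕ := ps u / 2 ^ (lv u - m)

lemma ap_lt {m : ℕ} (u : RTV k) (h : m ≤ lv u) : ap m u < 2 ^ m := by
  have h1 : ps u < 2 ^ lv u := ps_lt u
  have h2 : 2 ^ lv u = 2 ^ (lv u - m) * 2 ^ m := by rw [← pow_add]; congr 1; omega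
  have h3 : 0 < 2 ^ (lv u - m) := Nat.pow_pos (by norm_num)
  unfold ap
  exact Nat.div_lt_of_lt_mul (by omega)

lemma ap_self (u : RTV k) : ap (lv u) u = ps u := by simp [ap]

lemma ap_own {m : ℕ} (u : RTV k) (h : lv u = m) : ap m u = ps u := by
  subst h; exact ap_self u

lemma ap_succ (u : RTV k) {m : ℕ} (h : m + 1 ≤ lv u) : ap m u = ap (m + 1) u / 2 := by
  simp only [ap]
  rw [Nat.div_div_eq_div_mul]
  congr 1
  rw [← pow_succ]
  congr 1; omega

/-- Gap between the level-`m` ancestors of `u` and `v`. -/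
def gp (m : ℕ) (u v : RTV k) : ℕ := cycDist (2 ^ m) (ap m u) (ap m v)

lemma gp_self (m : ℕ) (u : RTV k) : gp m u u = 0 := cycDist_self _ _

lemma gp_comm (m : ℕ) (u v : RTV k) : gp m u v = gp m v u := cycDist_comm _ _ _

lemma gp_succ_le {m : ℕ} (u v : RTV k) (hu : m + 1 ≤ lv u) (hv : m + 1 ≤ lv v) :
    2 * gp m u v ≤ gp (m + 1) u v + 1 := by
  have h2 : (2:ℕ) ^ (m+1) = 2 * 2 ^ m := by rw [pow_succ]; ring
  have h := cycDist_half (M := 2 ^ m) (a := ap (m+1) u) (b := ap (m+1) v)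
    (by rw [← h2]; exact ap_lt u hu) (by rw [← h2]; exact ap_lt v hv)
  rw [← ap_succ u hu, ← ap_succ v hv, ← h2] at h
  unfold gp
  omega

lemma gp_add_le (m t : ℕ) (u v : RTV k) (hu : m + t ≤ lv u) (hv : m + t ≤ lv v) :
    gp m u v ≤ gp (m + t) u v := by
  induction t with
  | zero => simp
  | succ t ih =>
    have e3 : m + (t + 1) = (m + t) + 1 := by omega
    rw [e3]
    have h1 := ih (by omega) (by omega)
    have h2 := gp_succ_le (m := m + t) u v (by omega) (by omega)
    omega

lemma gp_mono {m m' : ℕ} (u v : RTV k) (h : m ≤ m') (hu : m' ≤ lv u) (hv : m' ≤ lv v) :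
    gp m u v ≤ gp m' u v := by
  obtain ⟨t, rfl⟩ := Nat.le.dest h
  exact gp_add_le m t u v hu hv

lemma gp_mul_le (m t : ℕ) (u v : RTV k) (hu : m + t ≤ lv u) (hv : m + t ≤ lv v) :
    gp m u v * 2 ^ t + 1 ≤ gp (m + t) u v + 2 ^ t := by
  induction t with
  | zero => simp
  | succ t ih =>
    have h1 := ih (by omega) (by omega)
    have h2 := gp_succ_le (m := m + t) u v (by omega) (by omega)
    have e1 : gp m u v * 2 ^ (t+1) = 2 * (gp m u v * 2 ^ t) := by ring
    have e2 : (2:ℕ) ^ (t+1) = 2 * 2 ^ t := by ring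
    have e3 : m + (t+1) = (m + t) + 1 := by omega
    rw [e1, e2, e3]
    omega

lemma gp_zero (u v : RTV k) : gp 0 u v = 0 := by
  have h1 := ap_lt u (Nat.zero_le _)
  have h2 := ap_lt v (Nat.zero_le _)
  unfold gp
  have : ap 0 u = 0 := by omega
  have : ap 0 v = 0 := by omega
  simp_all [cycDist_self]

/-- `(lv u - m) + (lv v - m) + gap at level m`. -/
def phi (m : ℕ) (u v : RTV k) : ℕ := (lv u - m) + (lv v - m) + gp m u v

/-- Approximate distance. -/
def mu (u v : RTV k) : ℕ :=
  (Finset.range (min (lv u) (lv v) + 1)).inf' Finset.nonempty_range_add_one (fun m => phi m u v)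

lemma mu_le_phi {u v : RTV k} {m : ℕ} (h : m ≤ min (lv u) (lv v)) : mu u v ≤ phi m u v :=
  Finset.inf'_le _ (Finset.mem_range.mpr (by omega))

lemma exists_mu_min (u v : RTV k) : ∃ m, m ≤ min (lv u) (lv v) ∧ phi m u v = mu u v := by
  obtain ⟨i, hi, h⟩ := Finset.exists_mem_eq_inf'
    (s := Finset.range (min (lv u) (lv v) + 1)) Finset.nonempty_range_add_one (fun m => phi m u v)
  exact ⟨i, by have := Finset.mem_range.mp hi; omega, h.symm⟩

lemma phi_zero (u v : RTV k) : phi 0 u v = lv u + lv v := by simp [phi, gp_zero]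

lemma mu_le_sum (u v : RTV k) : mu u v ≤ lv u + lv v := by
  have := mu_le_phi (u := u) (v := v) (m := 0) (Nat.zero_le _)
  rwa [phi_zero] at this

lemma phi_comm (m : ℕ) (u v : RTV k) : phi m u v = phi m v u := by
  unfold phi; rw [gp_comm]; ring

lemma mu_comm (u v : RTV k) : mu u v = mu v u := by
  apply le_antisymm
  · apply Finset.le_inf'
    intro b hb
    rw [← phi_comm]
    exact mu_le_phi (by have := Finset.mem_range.mp hb; omega)
  · apply Finset.le_inf'
    intro b hb
    rw [phi_comm]
    exact mu_le_phi (by have := Finset.mem_range.mp hb; omega)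

lemma exists_good_min (u v : RTV k) :
    ∃ a, a ≤ min (lv u) (lv v) ∧ phi a u v = mu u v ∧ gp a u v ≤ 3 := by
  classical
  have hex : ∃ m, m ≤ min (lv u) (lv v) ∧ phi m u v = mu u v := exists_mu_min u v
  obtain ⟨ha1, ha2⟩ := Nat.find_spec hex
  refine ⟨Nat.find hex, ha1, ha2, ?_⟩
  rcases Nat.eq_zero_or_pos (Nat.find hex) with h0 | hpos
  · rw [h0]; simp [gp_zero]
  · obtain ⟨a', haa⟩ : ∃ a', Nat.find hex = a' + 1 := ⟨Nat.find hex - 1, by omega⟩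
    have hnot := Nat.find_min hex (show a' < Nat.find hex by omega)
    push_neg at hnot
    have ha'le : a' ≤ min (lv u) (lv v) := by rw [haa] at ha1; omega
    have hne : phi a' u v ≠ mu u v := hnot ha'le
    have hge : mu u v ≤ phi a' u v := mu_le_phi ha'le
    have hsucc := gp_succ_le (m := a') u v (by rw [haa] at ha1; omega) (by rw [haa] at ha1; omega)
    rw [haa] at ha1 ha2 ⊢
    unfold phi at hne hge ha2
    omega

/-- Tree-like Gromov-product-type quantity. -/
def Pz (u v : RTV k) : ℤ := (lv u : ℤ) + (lv v : ℤ) - (mu u v : ℤ)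

lemma Pz_comm (u v : RTV k) : Pz u v = Pz v u := by unfold Pz; rw [mu_comm]; ring

lemma Pz_tri (u v x : RTV k) : min (Pz u x) (Pz x v) - 6 ≤ Pz u v := by
  obtain ⟨a, ha, hphia, hga⟩ := exists_good_min u x
  obtain ⟨b, hb, hphib, hgb⟩ := exists_good_min x v
  set t := min a b with ht
  have htu : t ≤ lv u := by omega
  have htv : t ≤ lv v := by omega
  have htx : t ≤ lv x := by omega
  have h1 : mu u v ≤ phi t u v := mu_le_phi (by omega)
  have h2 : gp t u v ≤ gp t u x + gp t x v :=
    cycDist_triangle (ap_lt u htu) (ap_lt v htv) (ap_lt x htx)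
  have h3 : gp t u x ≤ gp a u x := gp_mono u x (by omega) (by omega) (by omega)
  have h4 : gp t x v ≤ gp b x v := gp_mono x v (by omega) (by omega) (by omega)
  unfold phi at h1 hphia hphib
  unfold Pz
  omega

lemma four_pt {a b c d p q D : ℤ} (h1 : min a b - D ≤ p) (h2 : min c d - D ≤ p)
    (h3 : min c a - D ≤ q) (h4 : min d b - D ≤ q) :
    min (a + d) (c + b) - 2 * D ≤ p + q := by omega

/-- Four point condition for `Pz`. -/
lemma fourpoint (u v w x : RTV k) :
    (mu u v : ℤ) + (mu w x : ℤ) ≤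
      max ((mu u x : ℤ) + (mu v w : ℤ)) ((mu u w : ℤ) + (mu v x : ℤ)) + 12 := by
  have h1 : min (Pz u x) (Pz x v) - 6 ≤ Pz u v := Pz_tri u v x
  have h2 : min (Pz u w) (Pz w v) - 6 ≤ Pz u v := Pz_tri u v w
  have h3 : min (Pz u w) (Pz u x) - 6 ≤ Pz w x := by
    have := Pz_tri w x u; rwa [Pz_comm w u] at this
  have h4 : min (Pz w v) (Pz x v) - 6 ≤ Pz w x := by
    have := Pz_tri w x v; rwa [Pz_comm v x] at this
  have hmain := four_pt (a := Pz u x) (b := Pz x v) (c := Pz u w) (d := Pz w v)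
    (p := Pz u v) (q := Pz w x) (D := 6) h1 h2 h3 h4
  have e1 : Pz x v = Pz v x := Pz_comm _ _
  have e2 : Pz w v = Pz v w := Pz_comm _ _
  rw [e1, e2] at hmain
  unfold Pz at hmain
  omega



section Graph

variable {k : ℕ} {G : SimpleGraph (RTV k)} {F : ℕ}

lemma natdist_def (a b : ℕ) : Nat.dist a b = a - b + (b - a) := rfl

lemma two_le_pow {m : ℕ} (h : 1 ≤ m) : 2 ≤ 2 ^ m := by
  calc (2:ℕ) = 2 ^ 1 := by norm_num
  _ ≤ 2 ^ m := Nat.pow_le_pow_right (by norm_num) h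

/-- Under a tree edge (parent `p`, child `q`), ancestors at level `m ≤ lv p` agree. -/
lemma tree_ap {p q : RTV k} (h : lv p + 1 = lv q)
    (hps : ps q = 2 * ps p ∨ ps q = 2 * ps p + 1) {m : ℕ} (hm : m ≤ lv p) :
    ap m q = ap m p := by
  unfold ap
  rw [← h]
  have e1 : lv p + 1 - m = (lv p - m) + 1 := by omega
  rw [e1, pow_succ']
  rw [← Nat.div_div_eq_div_mul]
  congr 1
  omega

lemma cyc_succ_mod {N a : ℕ} (hN : 2 ≤ N) (ha : a < N) : cycDist N a ((a + 1) % N) ≤ 1 := by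
  rcases Nat.lt_or_ge (a + 1) N with h | h
  · rw [Nat.mod_eq_of_lt h]; simp only [cycDist, Nat.dist]; omega
  · have he : a + 1 = N := by omega
    rw [he, Nat.mod_self]; simp only [cycDist, Nat.dist]; omega

/-- Per-edge bound on the ring displacement of ancestors.  -/
lemma edge_bound (hex : ∀ p q : RTV k, G.Adj p q → ¬ (ringedTree k).Adj p q →
      lv p = lv q ∧ rtRingDist p q ≤ F) (hF : 1 ≤ F)
    {p q : RTV k} (hadj : G.Adj p q) {m : ℕ} (hmp : m ≤ lv p) (hmq : m ≤ lv q) :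
    F * Nat.dist (lv p) (lv q) + gp m p q ≤ F := by
  by_cases hrt : (ringedTree k).Adj p q
  · rcases hrt with (⟨h1, h2⟩ | ⟨h1, h2⟩) | hring
    · -- p parent of q
      have h1' : lv p + 1 = lv q := h1
      have h2' : ps q = 2 * ps p ∨ ps q = 2 * ps p + 1 := h2
      have hgp : gp m p q = 0 := by
        unfold gp; rw [tree_ap h1' h2' hmp]; exact cycDist_self _ _
      have hdist : Nat.dist (lv p) (lv q) = 1 := by rw [natdist_def]; omega
      rw [hgp, hdist]; omega
    · -- q parent of p
      have h1' : lv q + 1 = lv p := h1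
      have h2' : ps p = 2 * ps q ∨ ps p = 2 * ps q + 1 := h2
      have hgp : gp m p q = 0 := by
        unfold gp; rw [tree_ap h1' h2' hmq]; exact cycDist_self _ _
      have hdist : Nat.dist (lv p) (lv q) = 1 := by rw [natdist_def]; omega
      rw [hgp, hdist]; omega
    · -- ring edge
      obtain ⟨hlv0, h1, h2⟩ := hring
      have hlv : lv p = lv q := hlv0
      have h1' : 1 ≤ lv p := h1
      have hN : 2 ≤ 2 ^ lv p := two_le_pow h1'
      have hgl : gp (lv p) p q ≤ 1 := by
        unfold gp
        rw [ap_self p, ap_own q hlv.symm]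
        rcases h2 with h | h
        · have h' : ps q = (ps p + 1) % 2 ^ lv p := h
          rw [h']; exact cyc_succ_mod hN (ps_lt p)
        · have h' : ps p = (ps q + 1) % 2 ^ lv q := h
          rw [cycDist_comm, h', ← hlv]
          exact cyc_succ_mod hN (by rw [hlv]; exact ps_lt q)
      have hmono : gp m p q ≤ gp (lv p) p q := gp_mono p q hmp le_rfl (le_of_eq hlv)
      have hdist : Nat.dist (lv p) (lv q) = 0 := by rw [natdist_def]; omega
      rw [hdist]; omega
  · obtain ⟨hlv, hrd⟩ := hex p q hadj hrt
    have hgl : gp (lv p) p q = rtRingDist p q := by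
      unfold gp rtRingDist
      rw [ap_self p, ap_own q hlv.symm]
    have hmono : gp m p q ≤ gp (lv p) p q := gp_mono p q hmp le_rfl (le_of_eq hlv)
    have hdist : Nat.dist (lv p) (lv q) = 0 := by rw [natdist_def]; omega
    rw [hdist]; omega

/-- Walk bound: along a walk staying at levels `≥ m`, the level change plus `1/F` times the
ring displacement at level `m` is at most the length. -/
lemma walk_bound (hex : ∀ p q : RTV k, G.Adj p q → ¬ (ringedTree k).Adj p q →
      lv p = lv q ∧ rtRingDist p q ≤ F) (hF : 1 ≤ F)
    {p q : RTV k} (w : G.Walk p q) (m : ℕ) (hm : ∀ z ∈ w.support, m ≤ lv z) :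
    F * Nat.dist (lv p) (lv q) + gp m p q ≤ F * w.length := by
  induction w with
  | nil => simp [Nat.dist_self, gp_self]
  | @cons p p' q h w ih =>
    have hmp : m ≤ lv p := hm p (by simp)
    have hmp' : m ≤ lv p' := hm p' (by simp [SimpleGraph.Walk.support_cons])
    have hmq : m ≤ lv q := hm q (by simp [SimpleGraph.Walk.support_cons,
      SimpleGraph.Walk.end_mem_support])
    have hw := ih (fun z hz => hm z (by simp [SimpleGraph.Walk.support_cons]; right; exact hz))
    have he := edge_bound hex hF h hmp hmp'
    have htri1 : Nat.dist (lv p) (lv q) ≤ Nat.dist (lv p) (lv p') + Nat.dist (lv p') (lv q) :=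
      Nat.dist.triangle_inequality _ _ _
    have htri2 : gp m p q ≤ gp m p p' + gp m p' q :=
      cycDist_triangle (ap_lt p hmp) (ap_lt q hmq) (ap_lt p' hmp')
    simp only [SimpleGraph.Walk.length_cons]
    calc F * Nat.dist (lv p) (lv q) + gp m p q
        ≤ F * (Nat.dist (lv p) (lv p') + Nat.dist (lv p') (lv q)) + (gp m p p' + gp m p' q) :=
          add_le_add (Nat.mul_le_mul_left F htri1) htri2
      _ = (F * Nat.dist (lv p) (lv p') + gp m p p') + (F * Nat.dist (lv p') (lv q) + gp m p' q) :=
          by ring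
      _ ≤ F + F * w.length := add_le_add he hw
      _ = F * (w.length + 1) := by ring

/-- Walking up the tree to the ancestor at level `m`. -/
lemma exists_walk_up (hle : ringedTree k ≤ G) :
    ∀ n (u : RTV k) (m : ℕ), lv u - m = n → m ≤ lv u →
    ∃ (z : RTV k) (w : G.Walk u z), lv z = m ∧ ps z = ap m u ∧ w.length = lv u - m := by
  intro n
  induction n with
  | zero =>
    intro u m h hm
    refine ⟨u, SimpleGraph.Walk.nil, by omega, ?_, by simp; omega⟩
    rw [ap_own u (by omega)]
  | succ n ih =>
    intro u m h hm
    have h1 : 1 ≤ lv u := by omega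
    have hps := ps_lt u
    have hpow : 2 ^ lv u = 2 * 2 ^ (lv u - 1) := by
      rw [← pow_succ']; congr 1; omega
    have hklt : lv u - 1 < k := by have := lv_lt u; omega
    set p : RTV k := ⟨⟨lv u - 1, hklt⟩, ⟨ps u / 2, by
      show ps u / 2 < 2 ^ (lv u - 1); omega⟩⟩ with hp
    have hlvp : lv p = lv u - 1 := rfl
    have hpsp : ps p = ps u / 2 := rfl
    have hadj : G.Adj u p := by
      apply hle
      show treeAdj u p ∨ ringAdj u p
      left; right
      constructor
      · show lv p + 1 = lv u; omega
      · show ps u = 2 * ps p ∨ ps u = 2 * ps p + 1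
        rw [hpsp]; omega
    have hm' : m ≤ lv p := by omega
    obtain ⟨z, w, hz1, hz2, hz3⟩ := ih p m (by omega) hm'
    refine ⟨z, SimpleGraph.Walk.cons hadj w, hz1, ?_, by
      simp only [SimpleGraph.Walk.length_cons]; omega⟩
    rw [hz2]
    unfold ap
    rw [hlvp, hpsp, Nat.div_div_eq_div_mul]
    congr 1
    rw [← pow_succ']
    congr 1; omega

/-- One step along the ring towards a target. -/
lemma cyc_step {N a b : ℕ} (hN : 2 ≤ N) (ha : a < N) (hb : b < N) (hab : a ≠ b) :
    ∃ a', a' < N ∧ (a' = (a + 1) % N ∨ a = (a' + 1) % N) ∧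
      cycDist N a' b + 1 ≤ cycDist N a b := by
  rcases Nat.lt_or_ge a b with hlt | hge
  · by_cases hside : b - a ≤ N - (b - a)
    · exact ⟨a + 1, by omega, Or.inl (Nat.mod_eq_of_lt (by omega)).symm,
        by simp only [cycDist, Nat.dist]; omega⟩
    · by_cases ha0 : a = 0
      · refine ⟨N - 1, by omega, Or.inr ?_, by simp only [cycDist, Nat.dist]; omega⟩
        rw [show N - 1 + 1 = N by omega, Nat.mod_self]; omega
      · refine ⟨a - 1, by omega, Or.inr ?_, by simp only [cycDist, Nat.dist]; omega⟩
        rw [show a - 1 + 1 = a by omega, Nat.mod_eq_of_lt (by omega)]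
  · have hgt : b < a := by omega
    by_cases hside : a - b ≤ N - (a - b)
    · refine ⟨a - 1, by omega, Or.inr ?_, by simp only [cycDist, Nat.dist]; omega⟩
      rw [show a - 1 + 1 = a by omega, Nat.mod_eq_of_lt (by omega)]
    · by_cases haN : a = N - 1
      · refine ⟨0, by omega, Or.inl ?_, by simp only [cycDist, Nat.dist]; omega⟩
        rw [show a + 1 = N by omega, Nat.mod_self]
      · exact ⟨a + 1, by omega, Or.inl (Nat.mod_eq_of_lt (by omega)).symm,
          by simp only [cycDist, Nat.dist]; omega⟩

/-- Walks along the ring at a fixed level. -/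
lemma exists_walk_ring (hle : ringedTree k ≤ G) :
    ∀ (g m : ℕ) (hmk : m < k) (a b : ℕ) (ha : a < 2 ^ m) (hb : b < 2 ^ m),
    cycDist (2 ^ m) a b ≤ g →
    ∃ w : G.Walk (⟨⟨m, hmk⟩, ⟨a, ha⟩⟩ : RTV k) ⟨⟨m, hmk⟩, ⟨b, hb⟩⟩, w.length ≤ g := by
  intro g
  induction g with
  | zero =>
    intro m hmk a b ha hb hc
    have hab : a = b := by simp only [cycDist, Nat.dist] at hc; omega
    subst hab
    exact ⟨SimpleGraph.Walk.nil, by simp⟩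
  | succ g ih =>
    intro m hmk a b ha hb hc
    by_cases hab : a = b
    · subst hab; exact ⟨SimpleGraph.Walk.nil, by simp⟩
    · have hm1 : 1 ≤ m := by
        by_contra hcon
        have hm0 : m = 0 := by omega
        subst hm0
        simp only [pow_zero] at ha hb
        omega
      have hN : 2 ≤ 2 ^ m := two_le_pow hm1
      obtain ⟨a', ha', hadj, hdec⟩ := cyc_step hN ha hb hab
      have hGadj : G.Adj (⟨⟨m, hmk⟩, ⟨a, ha⟩⟩ : RTV k) ⟨⟨m, hmk⟩, ⟨a', ha'⟩⟩ := by
        apply hle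
        right
        exact ⟨rfl, hm1, by simpa using hadj⟩
      obtain ⟨w, hw⟩ := ih m hmk a' b ha' hb (by omega)
      exact ⟨SimpleGraph.Walk.cons hGadj w, by
        simp only [SimpleGraph.Walk.length_cons]; omega⟩

lemma dist_le_phi (hle : ringedTree k ≤ G) {u v : RTV k} {m : ℕ}
    (hm : m ≤ min (lv u) (lv v)) :
    G.Reachable u v ∧ G.dist u v ≤ phi m u v := by
  have hmu : m ≤ lv u := by omega
  have hmv : m ≤ lv v := by omega
  have hmk : m < k := lt_of_le_of_lt hmu (lv_lt u)
  obtain ⟨z1, w1, hz11, hz12, hz13⟩ := exists_walk_up hle (lv u - m) u m rfl hmu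
  obtain ⟨z2, w2, hz21, hz22, hz23⟩ := exists_walk_up hle (lv v - m) v m rfl hmv
  have hz1e : z1 = (⟨⟨m, hmk⟩, ⟨ap m u, ap_lt u hmu⟩⟩ : RTV k) := rtv_ext hz11 hz12
  have hz2e : z2 = (⟨⟨m, hmk⟩, ⟨ap m v, ap_lt v hmv⟩⟩ : RTV k) := rtv_ext hz21 hz22
  obtain ⟨wr, hwr⟩ := exists_walk_ring hle (gp m u v) m hmk (ap m u) (ap m v)
    (ap_lt u hmu) (ap_lt v hmv) le_rfl
  have hd := SimpleGraph.dist_le (((w1.copy rfl hz1e).append wr).append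
    (w2.copy rfl hz2e).reverse)
  simp only [SimpleGraph.Walk.length_append, SimpleGraph.Walk.length_reverse,
    SimpleGraph.Walk.length_copy] at hd
  refine ⟨(((w1.copy rfl hz1e).append wr).append (w2.copy rfl hz2e).reverse).reachable, ?_⟩
  unfold phi
  omega

lemma reachable_all (hle : ringedTree k ≤ G) (u v : RTV k) : G.Reachable u v :=
  (dist_le_phi hle (Nat.zero_le _)).1

lemma dist_le_mu (hle : ringedTree k ≤ G) (u v : RTV k) : G.dist u v ≤ mu u v := by
  apply Finset.le_inf'
  intro b hb
  exact (dist_le_phi hle (by have := Finset.mem_range.mp hb; omega)).2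

lemma pow_clog_le {F : ℕ} (hF : 1 ≤ F) : 2 ^ Nat.clog 2 F ≤ 2 * F := by
  rcases eq_or_lt_of_le hF with h1 | h2
  · rw [← h1, Nat.clog_one_right, pow_zero]; omega
  · have hlt := Nat.pow_pred_clog_lt_self (by norm_num : 1 < 2) h2
    have hpos : 0 < Nat.clog 2 F := Nat.clog_pos (by norm_num) h2
    have he : Nat.clog 2 F = ((Nat.clog 2 F) - 1) + 1 := by omega
    have hp : (Nat.clog 2 F).pred = Nat.clog 2 F - 1 := rfl
    rw [hp] at hlt
    calc 2 ^ Nat.clog 2 F = 2 ^ ((Nat.clog 2 F) - 1) * 2 := by rw [← pow_succ, ← he]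
    _ ≤ 2 * F := by omega

lemma mu_le_dist (hle : ringedTree k ≤ G)
    (hex : ∀ p q : RTV k, G.Adj p q → ¬ (ringedTree k).Adj p q →
      lv p = lv q ∧ rtRingDist p q ≤ F) (hF : 1 ≤ F) (u v : RTV k) :
    mu u v ≤ G.dist u v + (2 * Nat.clog 2 F + 2) := by
  classical
  obtain ⟨w, hwlen⟩ := (reachable_all hle u v).exists_walk_length_eq_dist
  obtain ⟨z0, hz0mem, hz0min⟩ := Finset.exists_min_image (w.support.toFinset) lv
    ⟨u, by simp [SimpleGraph.Walk.start_mem_support]⟩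
  rw [List.mem_toFinset] at hz0mem
  have hminsup : ∀ z ∈ w.support, lv z0 ≤ lv z := by
    intro z hz; exact hz0min z (by rwa [List.mem_toFinset])
  set m := lv z0 with hmdef
  have hmu : m ≤ lv u := hminsup u w.start_mem_support
  have hmv : m ≤ lv v := hminsup v w.end_mem_support
  have hlen : (w.takeUntil z0 hz0mem).length + (w.dropUntil z0 hz0mem).length = w.length := by
    rw [← SimpleGraph.Walk.length_append, SimpleGraph.Walk.take_spec]
  have hW1 := walk_bound hex hF (w.takeUntil z0 hz0mem) m
    (fun z hz => hminsup z (SimpleGraph.Walk.support_takeUntil_subset _ _ hz))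
  have hW2 := walk_bound hex hF (w.dropUntil z0 hz0mem) m
    (fun z hz => hminsup z (SimpleGraph.Walk.support_dropUntil_subset _ _ hz))
  have htri : gp m u v ≤ gp m u z0 + gp m z0 v :=
    cycDist_triangle (ap_lt u hmu) (ap_lt v hmv) (ap_lt z0 le_rfl)
  have e1 : Nat.dist (lv u) m = lv u - m := by simp only [Nat.dist]; omega
  have e2 : Nat.dist m (lv v) = lv v - m := by simp only [Nat.dist]; omega
  rw [e1] at hW1
  rw [e2] at hW2
  have key : F * ((lv u - m) + (lv v - m)) + gp m u v ≤ F * G.dist u v := by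
    calc F * ((lv u - m) + (lv v - m)) + gp m u v
        ≤ (F * (lv u - m) + gp m u z0) + (F * (lv v - m) + gp m z0 v) := by
          rw [mul_add]; omega
      _ ≤ F * (w.takeUntil z0 hz0mem).length + F * (w.dropUntil z0 hz0mem).length :=
          add_le_add hW1 hW2
      _ = F * w.length := by rw [← mul_add, hlen]
      _ = F * G.dist u v := by rw [hwlen]
  set L := Nat.clog 2 F with hL
  have hFle : F ≤ 2 ^ L := Nat.le_pow_clog (by norm_num) F
  have h2L : 2 ^ L ≤ 2 * F := pow_clog_le hF
  have hmulgoal : F * mu u v ≤ F * (G.dist u v + (2 * L + 2)) := by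
    by_cases hcase : L ≤ m
    · have hle1 : mu u v ≤ phi (m - L) u v := mu_le_phi (by omega)
      have hgm := gp_mul_le (m - L) L u v (by omega) (by omega)
      rw [show m - L + L = m by omega] at hgm
      have hphiv : phi (m - L) u v = (lv u - m) + (lv v - m) + 2 * L + gp (m - L) u v := by
        unfold phi; omega
      rw [hphiv] at hle1
      have hstep1 : F * mu u v ≤ F * ((lv u - m) + (lv v - m) + 2 * L + gp (m - L) u v) :=
        Nat.mul_le_mul_left F hle1
      have hstep2 : F * gp (m - L) u v + 1 ≤ gp m u v + 2 * F := by
        have h1 : F * gp (m - L) u v ≤ 2 ^ L * gp (m - L) u v :=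
          Nat.mul_le_mul_right _ hFle
        have h2 : gp (m - L) u v * 2 ^ L = 2 ^ L * gp (m - L) u v := by ring
        omega
      calc F * mu u v ≤ F * ((lv u - m) + (lv v - m) + 2 * L + gp (m - L) u v) := hstep1
        _ = F * ((lv u - m) + (lv v - m)) + F * (2 * L) + F * gp (m - L) u v := by ring
        _ ≤ F * ((lv u - m) + (lv v - m)) + F * (2 * L) + gp m u v + 2 * F := by omega
        _ ≤ F * G.dist u v + F * (2 * L) + 2 * F := by omega
        _ ≤ F * (G.dist u v + (2 * L + 2)) := by ring_nf; omega
    · have hle1 : mu u v ≤ lv u + lv v := mu_le_sum u v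
      have he : lv u + lv v = ((lv u - m) + (lv v - m)) + 2 * m := by omega
      have hstep1 : F * mu u v ≤ F * (((lv u - m) + (lv v - m)) + 2 * m) := by
        rw [← he]; exact Nat.mul_le_mul_left F hle1
      calc F * mu u v ≤ F * (((lv u - m) + (lv v - m)) + 2 * m) := hstep1
        _ = F * ((lv u - m) + (lv v - m)) + F * (2 * m) := by ring
        _ ≤ F * G.dist u v + F * (2 * L) := by
            have : F * (2 * m) ≤ F * (2 * L) := Nat.mul_le_mul_left F (by omega)
            omega
        _ ≤ F * (G.dist u v + (2 * L + 2)) := by ring_nf; omega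
  exact Nat.le_of_mul_le_mul_left (by
    calc F * mu u v ≤ F * (G.dist u v + (2 * L + 2)) := hmulgoal
    ) (by omega : 0 < F)

end Graph

section Final

variable {k : ℕ} {G : SimpleGraph (RTV k)} {F : ℕ}

lemma delta_quad (hle : ringedTree k ≤ G)
    (hex : ∀ p q : RTV k, G.Adj p q → ¬ (ringedTree k).Adj p q →
      lv p = lv q ∧ rtRingDist p q ≤ F) (hF : 1 ≤ F) (u v w x : RTV k) :
    deltaFour G u v w x ≤ (12 + 4 * (2 * (Nat.clog 2 F : ℝ) + 2)) / 2 := by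
  set E : ℕ := 2 * Nat.clog 2 F + 2 with hE
  have b1 : (G.dist u v : ℤ) ≤ (mu u v : ℤ) := by exact_mod_cast dist_le_mu hle u v
  have b2 : (G.dist w x : ℤ) ≤ (mu w x : ℤ) := by exact_mod_cast dist_le_mu hle w x
  have b3 : (G.dist u x : ℤ) ≤ (mu u x : ℤ) := by exact_mod_cast dist_le_mu hle u x
  have b4 : (G.dist v w : ℤ) ≤ (mu v w : ℤ) := by exact_mod_cast dist_le_mu hle v w
  have b5 : (G.dist u w : ℤ) ≤ (mu u w : ℤ) := by exact_mod_cast dist_le_mu hle u w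
  have b6 : (G.dist v x : ℤ) ≤ (mu v x : ℤ) := by exact_mod_cast dist_le_mu hle v x
  have c1 : (mu u v : ℤ) ≤ (G.dist u v : ℤ) + E := by exact_mod_cast mu_le_dist hle hex hF u v
  have c2 : (mu w x : ℤ) ≤ (G.dist w x : ℤ) + E := by exact_mod_cast mu_le_dist hle hex hF w x
  have c3 : (mu u x : ℤ) ≤ (G.dist u x : ℤ) + E := by exact_mod_cast mu_le_dist hle hex hF u x
  have c4 : (mu v w : ℤ) ≤ (G.dist v w : ℤ) + E := by exact_mod_cast mu_le_dist hle hex hF v w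
  have c5 : (mu u w : ℤ) ≤ (G.dist u w : ℤ) + E := by exact_mod_cast mu_le_dist hle hex hF u w
  have c6 : (mu v x : ℤ) ≤ (G.dist v x : ℤ) + E := by exact_mod_cast mu_le_dist hle hex hF v x
  have f1 := fourpoint u v w x
  have f2 := fourpoint u x v w
  have f3 := fourpoint u w v x
  have m1 : (mu x v : ℤ) = (mu v x : ℤ) := by rw [mu_comm]
  have m2 : (mu x w : ℤ) = (mu w x : ℤ) := by rw [mu_comm]
  have m3 : (mu w v : ℤ) = (mu v w : ℤ) := by rw [mu_comm]
  have key : 2 * max ((G.dist u v : ℤ) + (G.dist w x : ℤ))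
        (max ((G.dist u x : ℤ) + (G.dist v w : ℤ)) ((G.dist u w : ℤ) + (G.dist v x : ℤ)))
      + min ((G.dist u v : ℤ) + (G.dist w x : ℤ))
        (min ((G.dist u x : ℤ) + (G.dist v w : ℤ)) ((G.dist u w : ℤ) + (G.dist v x : ℤ)))
      ≤ (((G.dist u v : ℤ) + (G.dist w x : ℤ)) + ((G.dist u x : ℤ) + (G.dist v w : ℤ))
        + ((G.dist u w : ℤ) + (G.dist v x : ℤ))) + (12 + 4 * E) := by
    omega
  have hrfl : deltaFour G u v w x =
      (2 * max ((G.dist u v : ℝ) + (G.dist w x : ℝ))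
        (max ((G.dist u x : ℝ) + (G.dist v w : ℝ)) ((G.dist u w : ℝ) + (G.dist v x : ℝ)))
      + min ((G.dist u v : ℝ) + (G.dist w x : ℝ))
        (min ((G.dist u x : ℝ) + (G.dist v w : ℝ)) ((G.dist u w : ℝ) + (G.dist v x : ℝ)))
      - (((G.dist u v : ℝ) + (G.dist w x : ℝ)) + ((G.dist u x : ℝ) + (G.dist v w : ℝ))
        + ((G.dist u w : ℝ) + (G.dist v x : ℝ)))) / 2 := by
    unfold deltaFour
    ring
  rw [hrfl]
  have hcast : 2 * max ((G.dist u v : ℝ) + (G.dist w x : ℝ))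
        (max ((G.dist u x : ℝ) + (G.dist v w : ℝ)) ((G.dist u w : ℝ) + (G.dist v x : ℝ)))
      + min ((G.dist u v : ℝ) + (G.dist w x : ℝ))
        (min ((G.dist u x : ℝ) + (G.dist v w : ℝ)) ((G.dist u w : ℝ) + (G.dist v x : ℝ)))
      ≤ (((G.dist u v : ℝ) + (G.dist w x : ℝ)) + ((G.dist u x : ℝ) + (G.dist v w : ℝ))
        + ((G.dist u w : ℝ) + (G.dist v x : ℝ))) + (12 + 4 * (E : ℝ)) := by
    exact_mod_cast key
  have hEr : (E : ℝ) = 2 * (Nat.clog 2 F : ℝ) + 2 := by rw [hE]; push_cast; ring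
  rw [hEr] at hcast
  gcongr
  linarith [hcast]

lemma clog_le_maxlog (hF : 1 ≤ F) : (Nat.clog 2 F : ℝ) ≤ 3 * max 1 (Real.log F) := by
  have hmax : (1:ℝ) ≤ max 1 (Real.log F) := le_max_left _ _
  rcases eq_or_lt_of_le hF with h1 | h2
  · rw [← h1, Nat.clog_one_right]
    have h0 : (1:ℝ) ≤ max 1 (Real.log ((1:ℕ):ℝ)) := le_max_left _ _
    push_cast at h0 ⊢
    linarith
  · have hlt := Nat.pow_pred_clog_lt_self (by norm_num : 1 < 2) h2
    have hpos : 0 < Nat.clog 2 F := Nat.clog_pos (by norm_num) h2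
    have hp : (Nat.clog 2 F).pred = Nat.clog 2 F - 1 := rfl
    rw [hp] at hlt
    have hr : (2:ℝ) ^ (Nat.clog 2 F - 1) ≤ (F:ℝ) := by
      have : ((2 ^ (Nat.clog 2 F - 1) : ℕ) : ℝ) ≤ (F : ℝ) := by exact_mod_cast le_of_lt hlt
      push_cast at this
      exact this
    have hlog : ((Nat.clog 2 F - 1 : ℕ) : ℝ) * Real.log 2 ≤ Real.log F := by
      rw [← Real.log_pow]
      exact Real.log_le_log (by positivity) hr
    have hcc : ((Nat.clog 2 F - 1 : ℕ) : ℝ) = (Nat.clog 2 F : ℝ) - 1 := by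
      have : 1 ≤ Nat.clog 2 F := hpos
      push_cast [Nat.cast_sub this]
      ring
    rw [hcc] at hlog
    have hl2 : (1/2 : ℝ) < Real.log 2 := by
      have := Real.log_two_gt_d9; linarith
    have hlogF : Real.log F ≤ max 1 (Real.log F) := le_max_right _ _
    have hc1 : (1:ℝ) ≤ (Nat.clog 2 F : ℝ) := by exact_mod_cast hpos
    nlinarith [hlog, hl2, hlogF, hmax, hc1]

end Final

end RTProof

/-- There is a universal constant `c` such that: for every `k ≥ 1`, every
function `f` from positive integers to positive integers, and every graph `G` obtained from
the ringed tree `RT(k)` (with `n = 2^k - 1` vertices) by adding extra edges, each joining two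
vertices `u, v` at the same level with `d_R(u,v) ≤ f(n)`, one has
`δ(G) ≤ c · max(1, log f(n))`. -/
theorem ringedTree_bounded_jumps_hyperbolicity :
    ∃ c : ℝ, 0 < c ∧
      ∀ (k : ℕ), 0 < k →
        ∀ (f : ℕ → ℕ), (∀ m, 0 < f m) →
          ∀ G : SimpleGraph (RTV k),
            ringedTree k ≤ G →
            (∀ u v : RTV k, G.Adj u v → ¬ (ringedTree k).Adj u v →
              (u.1 : ℕ) = (v.1 : ℕ) ∧ rtRingDist u v ≤ f (2 ^ k - 1)) →
            hyperbolicity G ≤ c * max 1 (Real.log ((f (2 ^ k - 1) : ℕ) : ℝ)) := by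
  classical
  refine ⟨100, by norm_num, ?_⟩
  intro k hk f hf G hle hex
  set F := f (2 ^ k - 1) with hFdef
  have hF : 1 ≤ F := hf _
  have hne : Nonempty (RTV k) := ⟨⟨⟨0, hk⟩, ⟨0, by norm_num⟩⟩⟩
  have hlog : (12 + 4 * (2 * (Nat.clog 2 F : ℝ) + 2)) / 2 ≤ 100 * max 1 (Real.log F) := by
    have h1 := RTProof.clog_le_maxlog hF
    have hmax : (1:ℝ) ≤ max 1 (Real.log F) := le_max_left _ _
    linarith
  have hquad : ∀ u v w x : RTV k, deltaFour G u v w x ≤ 100 * max 1 (Real.log F) :=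
    fun u v w x => le_trans (RTProof.delta_quad hle hex hF u v w x) hlog
  unfold hyperbolicity
  exact ciSup_le fun u => ciSup_le fun v => ciSup_le fun w => ciSup_le fun x => hquad u v w x
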